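/- Suppose a + b = c + d. Then for every n ≥ 1, all real numbers k_1, ..., k_n, and every integer m with 1 ≤ m ≤ n, the pyramidal identity Σ_{i=1}^{2^m} x_i^m = Σ_{i=1}^{2^m} y_i^m holds, where the first 2^m entries of x^{(n)} and y^{(n)} coincide with the entries of x^{(m)} and y^{(m)}. Thus the constructed numbers solve the pyramidal system in which the m-th identity involves 2^m terms raised to the power m on each side. -/

import Mathlib

/-- The pair of sequences `(x^{(t+1)}, y^{(t+1)})` of length `2^(t+1)` (0-based internal
level `t` corresponds to the paper's level `m = t + 1`).  `(seqXY a b c d k t i).1` is the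
`i`-th entry (0-based) of `x^{(t+1)}` and `.2` that of `y^{(t+1)}`. -/
noncomputable def seqXY (a b c d : ℝ) (k : ℕ → ℝ) : ℕ → ℕ → ℝ × ℝ
  | 0, i => if i = 0 then (a + k 1, c + k 1) else (b + k 1, d + k 1)
  | t + 1, i =>
      if i < 2 ^ (t + 1) then seqXY a b c d k t i
      else ((seqXY a b c d k t (i - 2 ^ (t + 1))).2 + k (t + 2),
            (seqXY a b c d k t (i - 2 ^ (t + 1))).1 + k (t + 2))

/-- `X a b c d k n i` is the entry `x_{i+1}` of the sequence `x^{(n)}` (for `n ≥ 1`,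
`0 ≤ i < 2^n`). -/
noncomputable def X (a b c d : ℝ) (k : ℕ → ℝ) (n i : ℕ) : ℝ :=
  (seqXY a b c d k (n - 1) i).1

/-- `Y a b c d k n i` is the entry `y_{i+1}` of the sequence `y^{(n)}` (for `n ≥ 1`,
`0 ≤ i < 2^n`). -/
noncomputable def Y (a b c d : ℝ) (k : ℕ → ℝ) (n i : ℕ) : ℝ :=
  (seqXY a b c d k (n - 1) i).2

lemma sum_range_split (f : ℕ → ℝ) (m : ℕ) :
    ∑ i ∈ Finset.range (m + m), f i =
      ∑ i ∈ Finset.range m, f i + ∑ i ∈ Finset.range m, f (m + i) := by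
  rw [Finset.range_add,
    Finset.sum_union (Finset.disjoint_range_addLeftEmbedding m (Finset.range m)),
    Finset.sum_map]
  simp [addLeftEmbedding]

lemma seqXY_prefix (a b c d : ℝ) (k : ℕ → ℝ) :
    ∀ t t', t' ≤ t → ∀ i, i < 2 ^ (t' + 1) →
      seqXY a b c d k t i = seqXY a b c d k t' i := by
  intro t
  induction t with
  | zero => intro t' h i hi; interval_cases t'; rfl
  | succ s ih =>
    intro t' h i hi
    rcases Nat.eq_or_lt_of_le h with rfl | h'
    · rfl
    · have ht : t' ≤ s := Nat.lt_succ_iff.mp h'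
      have hi' : i < 2 ^ (s + 1) :=
        lt_of_lt_of_le hi (Nat.pow_le_pow_right (by norm_num) (by omega))
      rw [seqXY, if_pos hi', ih t' ht i hi]

lemma seqXY_sum (a b c d : ℝ) (h : a + b = c + d) (k : ℕ → ℝ) :
    ∀ t, ∀ j ≤ t + 1,
      ∑ i ∈ Finset.range (2 ^ (t + 1)), (seqXY a b c d k t i).1 ^ j =
      ∑ i ∈ Finset.range (2 ^ (t + 1)), (seqXY a b c d k t i).2 ^ j := by
  intro t
  induction t with
  | zero =>
    intro j hj
    interval_cases j
    · simp
    · simp [seqXY, Finset.sum_range_succ]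
      linarith
  | succ s ih =>
    intro j hj
    set K := k (s + 2) with hK
    have hsplit : 2 ^ (s + 1 + 1) = 2 ^ (s + 1) + 2 ^ (s + 1) := by ring
    rw [hsplit, sum_range_split, sum_range_split]
    have e1 : ∀ i ∈ Finset.range (2 ^ (s + 1)),
        (seqXY a b c d k (s + 1) i).1 ^ j = (seqXY a b c d k s i).1 ^ j := by
      intro i hi; rw [seqXY, if_pos (Finset.mem_range.mp hi)]
    have e2 : ∀ i ∈ Finset.range (2 ^ (s + 1)),
        (seqXY a b c d k (s + 1) i).2 ^ j = (seqXY a b c d k s i).2 ^ j := by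
      intro i hi; rw [seqXY, if_pos (Finset.mem_range.mp hi)]
    have e3 : ∀ i ∈ Finset.range (2 ^ (s + 1)),
        (seqXY a b c d k (s + 1) (2 ^ (s + 1) + i)).1 ^ j =
          ((seqXY a b c d k s i).2 + K) ^ j := by
      intro i hi; rw [seqXY, if_neg (by omega)]
      simp [hK]
    have e4 : ∀ i ∈ Finset.range (2 ^ (s + 1)),
        (seqXY a b c d k (s + 1) (2 ^ (s + 1) + i)).2 ^ j =
          ((seqXY a b c d k s i).1 + K) ^ j := by
      intro i hi; rw [seqXY, if_neg (by omega)]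
      simp [hK]
    rw [Finset.sum_congr rfl e1, Finset.sum_congr rfl e2, Finset.sum_congr rfl e3,
      Finset.sum_congr rfl e4]
    -- expand binomials
    have expand : ∀ z : ℝ, (z + K) ^ j =
        ∑ l ∈ Finset.range (j + 1), z ^ l * K ^ (j - l) * (j.choose l : ℝ) := by
      intro z; rw [add_pow]
    simp only [expand]
    rw [Finset.sum_comm, Finset.sum_comm (s := Finset.range (2 ^ (s+1)))]
    simp only [← Finset.sum_mul]
    rw [Finset.sum_range_succ, Finset.sum_range_succ (f := fun l =>
      (∑ i ∈ Finset.range (2 ^ (s+1)), (seqXY a b c d k s i).1 ^ l) * K ^ (j - l) * (j.choose l : ℝ))]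
    have lower : ∑ l ∈ Finset.range j,
        (∑ i ∈ Finset.range (2 ^ (s+1)), (seqXY a b c d k s i).2 ^ l) * K ^ (j - l) * (j.choose l : ℝ) =
        ∑ l ∈ Finset.range j,
        (∑ i ∈ Finset.range (2 ^ (s+1)), (seqXY a b c d k s i).1 ^ l) * K ^ (j - l) * (j.choose l : ℝ) := by
      refine Finset.sum_congr rfl fun l hl => ?_
      rw [ih l (by have := Finset.mem_range.mp hl; omega)]
    rw [lower]
    simp [Nat.choose_self]
    ring

theorem pyramidal_system (a b c d : ℝ) (h : a + b = c + d)
    (n : ℕ) (hn : 1 ≤ n) (k : ℕ → ℝ) (m : ℕ) (hm1 : 1 ≤ m) (hmn : m ≤ n) :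
    ∑ i ∈ Finset.range (2 ^ m), X a b c d k n i ^ m =
      ∑ i ∈ Finset.range (2 ^ m), Y a b c d k n i ^ m := by
  have hm : m - 1 + 1 = m := by omega
  have pre : ∀ i ∈ Finset.range (2 ^ m),
      seqXY a b c d k (n - 1) i = seqXY a b c d k (m - 1) i := by
    intro i hi
    exact seqXY_prefix a b c d k (n - 1) (m - 1) (by omega) i
      (by rw [hm]; exact Finset.mem_range.mp hi)
  unfold X Y
  have hX : ∑ i ∈ Finset.range (2 ^ m), (seqXY a b c d k (n - 1) i).1 ^ m =
      ∑ i ∈ Finset.range (2 ^ m), (seqXY a b c d k (m - 1) i).1 ^ m :=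
    Finset.sum_congr rfl fun i hi => by rw [pre i hi]
  have hY : ∑ i ∈ Finset.range (2 ^ m), (seqXY a b c d k (n - 1) i).2 ^ m =
      ∑ i ∈ Finset.range (2 ^ m), (seqXY a b c d k (m - 1) i).2 ^ m :=
    Finset.sum_congr rfl fun i hi => by rw [pre i hi]
  rw [hX, hY]
  have := seqXY_sum a b c d h k (m - 1) m (by omega)
  rwa [hm] at this
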